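/- Let Ω ⊆ ℝ^ν be measurable and R > 0, and let D be the integral operator on L²(ℝ^ν) with kernel D(x,y) = χ_Ω(x) Q_{2R}(x − y) χ_Ω(y), where Q_ρ is the characteristic function of {z : |z| < ρ}. Then for every k ≥ 1, the kernel of D^k satisfies 0 ≤ D^k(x,y) ≤ Q_{2kR}(x − y) · (ω_y^{2kR}(Ω))^{k−1} · χ_Ω(y) for all x, y. -/

import Mathlib

open MeasureTheory
open scoped NNReal ENNReal
noncomputable section

/-- The kernel `D(x,y) = χ_Ω(x) Q_{2R}(x-y) χ_Ω(y)`. -/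
def Dker {ν : ℕ} (Ω : Set (EuclideanSpace ℝ (Fin ν))) (R : ℝ)
    (x y : EuclideanSpace ℝ (Fin ν)) : ℝ :=
  Ω.indicator (fun _ => (1 : ℝ)) x * {z : EuclideanSpace ℝ (Fin ν) | ‖z‖ < 2 * R}.indicator
    (fun _ => (1 : ℝ)) (x - y) * Ω.indicator (fun _ => (1 : ℝ)) y

/-- `iterKernel D k` is the kernel of the `(k+1)`-st power of the integral operator
with kernel `D`: `iterKernel D 0 = D` and
`iterKernel D (k+1) (x,y) = ∫ D(x,z) iterKernel D k (z,y) dz`. -/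
def iterKernel {ν : ℕ}
    (D : EuclideanSpace ℝ (Fin ν) → EuclideanSpace ℝ (Fin ν) → ℝ) :
    ℕ → EuclideanSpace ℝ (Fin ν) → EuclideanSpace ℝ (Fin ν) → ℝ
  | 0 => D
  | k + 1 => fun x y => ∫ z, D x z * iterKernel D k z y

namespace St18

variable {ν : ℕ}

lemma ind_nonneg (s : Set (EuclideanSpace ℝ (Fin ν))) (x : EuclideanSpace ℝ (Fin ν)) :
    0 ≤ s.indicator (fun _ => (1:ℝ)) x :=
  Set.indicator_nonneg (fun _ _ => zero_le_one) x

lemma ind_le_one (s : Set (EuclideanSpace ℝ (Fin ν))) (x : EuclideanSpace ℝ (Fin ν)) :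
    s.indicator (fun _ => (1:ℝ)) x ≤ 1 := by
  classical
  by_cases h : x ∈ s <;> simp [Set.indicator_apply, h]

lemma Dker_nonneg (Ω : Set (EuclideanSpace ℝ (Fin ν))) (R : ℝ)
    (x y : EuclideanSpace ℝ (Fin ν)) : 0 ≤ Dker Ω R x y :=
  mul_nonneg (mul_nonneg (ind_nonneg _ _) (ind_nonneg _ _)) (ind_nonneg _ _)

lemma Dker_le_indΩ (Ω : Set (EuclideanSpace ℝ (Fin ν))) (R : ℝ)
    (x y : EuclideanSpace ℝ (Fin ν)) :
    Dker Ω R x y ≤ Ω.indicator (fun _ => (1:ℝ)) y := by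
  classical
  unfold Dker
  simp only [Set.indicator_apply]
  split_ifs <;> norm_num

lemma Dker_le_one (Ω : Set (EuclideanSpace ℝ (Fin ν))) (R : ℝ)
    (x y : EuclideanSpace ℝ (Fin ν)) : Dker Ω R x y ≤ 1 :=
  le_trans (Dker_le_indΩ Ω R x y) (ind_le_one _ _)

lemma Dker_eq_zero_of_far (Ω : Set (EuclideanSpace ℝ (Fin ν))) (R : ℝ)
    {x y : EuclideanSpace ℝ (Fin ν)} (h : ¬ ‖x - y‖ < 2 * R) :
    Dker Ω R x y = 0 := by
  unfold Dker
  have h0 : ({z : EuclideanSpace ℝ (Fin ν) | ‖z‖ < 2 * R}).indicator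
      (fun _ => (1:ℝ)) (x - y) = 0 := Set.indicator_of_notMem (by simpa using h) _
  rw [h0]
  ring

lemma Dker_eq_zero_of_not_mem (Ω : Set (EuclideanSpace ℝ (Fin ν))) (R : ℝ)
    {x : EuclideanSpace ℝ (Fin ν)} (y : EuclideanSpace ℝ (Fin ν)) (h : x ∉ Ω) :
    Dker Ω R x y = 0 := by
  unfold Dker
  rw [Set.indicator_of_notMem h]
  ring

lemma Dker_eq_zero_of_not_mem' (Ω : Set (EuclideanSpace ℝ (Fin ν))) (R : ℝ)
    (x : EuclideanSpace ℝ (Fin ν)) {y : EuclideanSpace ℝ (Fin ν)} (h : y ∉ Ω) :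
    Dker Ω R x y = 0 := by
  unfold Dker
  have h0 : Ω.indicator (fun _ => (1:ℝ)) y = 0 := Set.indicator_of_notMem h _
  rw [h0, mul_zero]

lemma main (Ω : Set (EuclideanSpace ℝ (Fin ν)))
    (hΩmeas : MeasurableSet Ω) (R : ℝ) (hR : 0 < R) (n : ℕ) :
    ∀ x y : EuclideanSpace ℝ (Fin ν),
      0 ≤ iterKernel (Dker Ω R) n x y ∧
      iterKernel (Dker Ω R) n x y ≤
        {z : EuclideanSpace ℝ (Fin ν) | ‖z‖ < 2 * (n + 1 : ℕ) * R}.indicator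
            (fun _ => (1 : ℝ)) (x - y) *
          (volume (Ω ∩ Metric.closedBall y (2 * (n + 1 : ℕ) * R))).toReal ^ n *
          Ω.indicator (fun _ => (1 : ℝ)) y := by
  induction n with
  | zero =>
    intro x y
    refine ⟨Dker_nonneg Ω R x y, ?_⟩
    have h2 : (2 : ℝ) * ((0 + 1 : ℕ) : ℝ) * R = 2 * R := by norm_num
    rw [h2]
    simp only [pow_zero, mul_one]
    show Dker Ω R x y ≤ _
    by_cases h : ‖x - y‖ < 2 * R
    · rw [Set.indicator_of_mem (by simpa using h), one_mul]
      exact Dker_le_indΩ Ω R x y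
    · rw [Dker_eq_zero_of_far Ω R h]
      exact mul_nonneg (ind_nonneg _ _) (ind_nonneg _ _)
  | succ n ih =>
    intro x y
    set r : ℝ := 2 * ((n + 1 : ℕ) : ℝ) * R with hr
    set r' : ℝ := 2 * ((n + 1 + 1 : ℕ) : ℝ) * R with hr'
    have hrr' : r + 2 * R = r' := by rw [hr, hr']; push_cast; ring
    have hrpos : 0 ≤ r := by positivity
    have hrle : r ≤ r' := by linarith
    set M : ℝ := (volume (Ω ∩ Metric.closedBall y r)).toReal with hM
    set M' : ℝ := (volume (Ω ∩ Metric.closedBall y r')).toReal with hM'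
    have hfin' : volume (Ω ∩ Metric.closedBall y r') < ⊤ :=
      lt_of_le_of_lt (measure_mono Set.inter_subset_right) measure_closedBall_lt_top
    have hMM' : M ≤ M' := by
      rw [hM, hM']
      apply ENNReal.toReal_mono hfin'.ne
      exact measure_mono (Set.inter_subset_inter_right _
        (Metric.closedBall_subset_closedBall hrle))
    have hM'nonneg : 0 ≤ M' := ENNReal.toReal_nonneg
    have hMnonneg : 0 ≤ M := ENNReal.toReal_nonneg
    have hker : iterKernel (Dker Ω R) (n + 1) x y
        = ∫ z, Dker Ω R x z * iterKernel (Dker Ω R) n z y := rfl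
    -- rewritten inductive hypothesis
    have ih' : ∀ z, 0 ≤ iterKernel (Dker Ω R) n z y ∧
        iterKernel (Dker Ω R) n z y ≤
          {w : EuclideanSpace ℝ (Fin ν) | ‖w‖ < r}.indicator (fun _ => (1:ℝ)) (z - y) *
            M ^ n * Ω.indicator (fun _ => (1:ℝ)) y := by
      intro z
      have h := ih z y
      rw [← hM] at h
      exact h
    have hKzero : ∀ z, ¬ ‖z - y‖ < r → iterKernel (Dker Ω R) n z y = 0 := by
      intro z hzy
      have h1 := (ih' z).2
      rw [Set.indicator_of_notMem (by simpa using hzy), zero_mul, zero_mul] at h1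
      linarith [(ih' z).1]
    constructor
    · rw [hker]
      exact integral_nonneg fun z => mul_nonneg (Dker_nonneg _ _ _ _) ((ih' z).1)
    · set S : Set (EuclideanSpace ℝ (Fin ν)) := Ω ∩ Metric.closedBall y r' with hS
      have hSmeas : MeasurableSet S := hΩmeas.inter measurableSet_closedBall
      set C : ℝ := M' ^ n * Ω.indicator (fun _ => (1:ℝ)) y with hC
      have hCnonneg : 0 ≤ C := mul_nonneg (pow_nonneg hM'nonneg n) (ind_nonneg _ _)
      have hgint : Integrable (S.indicator (fun _ => C)) volume := by
        rw [integrable_indicator_iff hSmeas]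
        exact integrableOn_const hfin'.ne
      have hbound : ∀ z, Dker Ω R x z * iterKernel (Dker Ω R) n z y
          ≤ S.indicator (fun _ => C) z := by
        intro z
        by_cases hzΩ : z ∈ Ω
        · by_cases hzy : ‖z - y‖ < r
          · have hzS : z ∈ S := ⟨hzΩ, by
              rw [Metric.mem_closedBall, dist_eq_norm]; exact le_trans hzy.le hrle⟩
            rw [Set.indicator_of_mem hzS]
            have hK2 := (ih' z).2
            rw [Set.indicator_of_mem (by simpa using hzy), one_mul] at hK2
            calc Dker Ω R x z * iterKernel (Dker Ω R) n z y
                ≤ 1 * iterKernel (Dker Ω R) n z y :=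
                  mul_le_mul_of_nonneg_right (Dker_le_one Ω R x z) (ih' z).1
              _ = iterKernel (Dker Ω R) n z y := one_mul _
              _ ≤ M ^ n * Ω.indicator (fun _ => (1:ℝ)) y := hK2
              _ ≤ C := by
                  rw [hC]
                  exact mul_le_mul_of_nonneg_right
                    (pow_le_pow_left₀ hMnonneg hMM' n) (ind_nonneg _ _)
          · rw [hKzero z hzy, mul_zero]
            exact Set.indicator_nonneg (fun _ _ => hCnonneg) z
        · rw [Dker_eq_zero_of_not_mem' Ω R x hzΩ, zero_mul]
          exact Set.indicator_nonneg (fun _ _ => hCnonneg) z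
      have hIle : (∫ z, Dker Ω R x z * iterKernel (Dker Ω R) n z y)
          ≤ ∫ z, S.indicator (fun _ => C) z :=
        integral_mono_of_nonneg
          (Filter.Eventually.of_forall fun z =>
            mul_nonneg (Dker_nonneg _ _ _ _) ((ih' z).1))
          hgint (Filter.Eventually.of_forall hbound)
      have hIg : (∫ z, S.indicator (fun _ => C) z) = M' * C := by
        rw [integral_indicator_const _ hSmeas, smul_eq_mul]; rfl
      by_cases hxy : ‖x - y‖ < r'
      · rw [Set.indicator_of_mem (by simpa using hxy), one_mul, hker]
        calc (∫ z, Dker Ω R x z * iterKernel (Dker Ω R) n z y)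
            ≤ M' * C := hIg ▸ hIle
          _ = M' ^ (n + 1) * Ω.indicator (fun _ => (1:ℝ)) y := by rw [hC]; ring
      · have hzero : ∀ z, Dker Ω R x z * iterKernel (Dker Ω R) n z y = 0 := by
          intro z
          by_cases hxz : ‖x - z‖ < 2 * R
          · by_cases hzy : ‖z - y‖ < r
            · exfalso
              apply hxy
              calc ‖x - y‖ ≤ ‖x - z‖ + ‖z - y‖ := by
                    have := norm_add_le (x - z) (z - y)
                    simpa using this
                _ < 2 * R + r := by linarith
                _ = r' := by linarith
            · rw [hKzero z hzy, mul_zero]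
          · rw [Dker_eq_zero_of_far Ω R hxz, zero_mul]
        have hI0 : iterKernel (Dker Ω R) (n + 1) x y = 0 := by
          rw [hker]
          simp only [hzero]
          exact integral_zero _ _
        rw [hI0, Set.indicator_of_notMem (by simpa using hxy), zero_mul, zero_mul]

end St18

/-- The kernel of `D^k` satisfies
`0 ≤ D^k(x,y) ≤ Q_{2kR}(x-y) (ω_y^{2kR}(Ω))^{k-1} χ_Ω(y)`. -/
theorem statement18 (ν : ℕ) (hν : 1 ≤ ν) (Ω : Set (EuclideanSpace ℝ (Fin ν)))
    (hΩmeas : MeasurableSet Ω) (R : ℝ) (hR : 0 < R) (k : ℕ) (hk : 1 ≤ k) :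
    ∀ x y : EuclideanSpace ℝ (Fin ν),
      0 ≤ iterKernel (Dker Ω R) (k - 1) x y ∧
      iterKernel (Dker Ω R) (k - 1) x y ≤
        {z : EuclideanSpace ℝ (Fin ν) | ‖z‖ < 2 * k * R}.indicator (fun _ => (1 : ℝ)) (x - y) *
          (volume (Ω ∩ Metric.closedBall y (2 * k * R))).toReal ^ (k - 1) *
          Ω.indicator (fun _ => (1 : ℝ)) y := by
  obtain ⟨n, rfl⟩ : ∃ n, k = n + 1 := ⟨k - 1, (Nat.succ_pred_eq_of_pos hk).symm⟩
  intro x y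
  simpa using St18.main Ω hΩmeas R hR n x y
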